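/- Every finite simple graph G admits an orientation of its edges in which every vertex has out-degree at most ⌈√(|E(G)|/2)⌉. -/

import Mathlib

private lemma orientation_aux {V : Type*} [Fintype V] [DecidableEq V]
    (G : SimpleGraph V) [DecidableRel G.Adj] (d : ℕ)
    (hm2d : G.edgeFinset.card ≤ 2 * d ^ 2) :
    ∃ D : Finset (V × V),
      (∀ p ∈ D, G.Adj p.1 p.2) ∧
      (∀ u v : V, G.Adj u v → ((u, v) ∈ D ↔ (v, u) ∉ D)) ∧
      ∀ v : V, (D.filter fun p => p.1 = v).card ≤ d := by
  classical
  let t : {x // x ∈ G.edgeFinset} → Finset (V × Fin d) :=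
    fun e => (Finset.univ.filter fun v => v ∈ (e : Sym2 V)) ×ˢ Finset.univ
  have hall : ∀ s : Finset {x // x ∈ G.edgeFinset}, s.card ≤ (s.biUnion t).card := by
    intro s
    set T : Finset V := s.biUnion fun e => Finset.univ.filter fun v => v ∈ (e : Sym2 V) with hT
    have hbu : s.biUnion t = T ×ˢ (Finset.univ : Finset (Fin d)) := by
      ext p
      simp only [Finset.mem_biUnion, Finset.mem_product, hT, t, Finset.mem_filter,
        Finset.mem_univ, true_and, and_true]
    rw [hbu, Finset.card_product, Finset.card_univ, Fintype.card_fin]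
    have hsm : s.card ≤ G.edgeFinset.card := by
      calc s.card ≤ Fintype.card {x // x ∈ G.edgeFinset} := Finset.card_le_univ s
        _ = G.edgeFinset.card := Fintype.card_coe _
    have hsT : s.card ≤ T.sym2.card := by
      apply Finset.card_le_card_of_injOn (Subtype.val : {x // x ∈ G.edgeFinset} → Sym2 V)
      · intro e he
        rw [Finset.mem_coe, Finset.mem_sym2_iff]
        intro a ha
        rw [hT]
        exact Finset.mem_biUnion.2 ⟨e, he, by simp [ha]⟩
      · intro e _ e' _ h
        exact Subtype.ext h
    rw [Finset.card_sym2] at hsT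
    set k := T.card with hk
    by_cases hkd : 2 * d ≤ k
    · calc s.card ≤ G.edgeFinset.card := hsm
        _ ≤ 2 * d ^ 2 := hm2d
        _ = (2 * d) * d := by ring
        _ ≤ k * d := Nat.mul_le_mul_right d hkd
    · have hk1 : k + 1 ≤ 2 * d := by omega
      have hchoose : (k + 1).choose 2 ≤ k * d := by
        rw [Nat.choose_two_right, Nat.add_sub_cancel]
        calc (k + 1) * k / 2 ≤ (2 * d) * k / 2 :=
              Nat.div_le_div_right (Nat.mul_le_mul_right k hk1)
          _ = 2 * (d * k) / 2 := by ring_nf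
          _ = d * k := Nat.mul_div_cancel_left _ (by norm_num)
          _ = k * d := Nat.mul_comm d k
      exact hsT.trans hchoose
  obtain ⟨f, hfinj, hft⟩ := (Finset.all_card_le_biUnion_card_iff_exists_injective t).1 hall
  have hfe : ∀ e : {x // x ∈ G.edgeFinset}, (f e).1 ∈ (e : Sym2 V) := by
    intro e
    have := hft e
    simp only [t, Finset.mem_product, Finset.mem_filter, Finset.mem_univ, true_and] at this
    exact this.1
  let g : {x // x ∈ G.edgeFinset} → V × V := fun e => ((f e).1, Sym2.Mem.other' (hfe e))
  have hge : ∀ e, s((g e).1, (g e).2) = (e : Sym2 V) := fun e => Sym2.other_spec' (hfe e)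
  refine ⟨Finset.univ.image g, ?_, ?_, ?_⟩
  · intro p hp
    obtain ⟨e, _, hgep⟩ := Finset.mem_image.1 hp
    have : s(p.1, p.2) ∈ G.edgeSet := by
      rw [← hgep, hge e]
      exact SimpleGraph.mem_edgeFinset.1 e.2
    exact this
  · intro u v huv
    have hne : u ≠ v := G.ne_of_adj huv
    have he0mem : s(u, v) ∈ G.edgeFinset := SimpleGraph.mem_edgeFinset.2 huv
    set e0 : {x // x ∈ G.edgeFinset} := ⟨s(u, v), he0mem⟩ with he0def
    have hval : (e0 : Sym2 V) = s(u, v) := rfl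
    have key : ∀ e, (g e = (u, v) ∨ g e = (v, u)) → e = e0 := by
      intro e h
      apply Subtype.ext
      rcases h with h | h
      · have h2 := hge e
        rw [h] at h2
        exact h2.symm.trans hval.symm
      · have h2 := hge e
        rw [h] at h2
        rw [← h2, Sym2.eq_swap, hval]
    have htail : (f e0).1 = u ∨ (f e0).1 = v := Sym2.mem_iff.1 (hfe e0)
    have hor : g e0 = (u, v) ∨ g e0 = (v, u) := by
      have hs : s((g e0).1, (g e0).2) = s(u, v) := (hge e0).trans hval
      rcases htail with h | h
      · left
        have hs' : s(u, (g e0).2) = s(u, v) := by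
          have h' : (g e0).1 = u := h
          rwa [h'] at hs
        have h2 : (g e0).2 = v := by
          rcases Sym2.eq_iff.1 hs' with ⟨_, h2⟩ | ⟨h1, _⟩
          · exact h2
          · exact absurd h1 hne
        exact Prod.ext_iff.2 ⟨h, h2⟩
      · right
        have hs' : s(v, (g e0).2) = s(u, v) := by
          have h' : (g e0).1 = v := h
          rwa [h'] at hs
        have h2 : (g e0).2 = u := by
          rcases Sym2.eq_iff.1 hs' with ⟨h1, _⟩ | ⟨_, h2⟩
          · exact absurd h1 (fun hh => hne hh.symm)
          · exact h2
        exact Prod.ext_iff.2 ⟨h, h2⟩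
    have huvD : (u, v) ∈ Finset.univ.image g ↔ g e0 = (u, v) := by
      constructor
      · intro h
        obtain ⟨e, _, hgep⟩ := Finset.mem_image.1 h
        rw [key e (Or.inl hgep)] at hgep
        exact hgep
      · intro h
        exact Finset.mem_image.2 ⟨e0, Finset.mem_univ _, h⟩
    have hvuD : (v, u) ∈ Finset.univ.image g ↔ g e0 = (v, u) := by
      constructor
      · intro h
        obtain ⟨e, _, hgep⟩ := Finset.mem_image.1 h
        rw [key e (Or.inr hgep)] at hgep
        exact hgep
      · intro h
        exact Finset.mem_image.2 ⟨e0, Finset.mem_univ _, h⟩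
    have hnot : ¬(g e0 = (u, v) ∧ g e0 = (v, u)) := by
      rintro ⟨h1, h2⟩
      rw [h1] at h2
      exact hne (Prod.ext_iff.1 h2).1
    rw [huvD, hvuD]
    rcases hor with h | h
    · exact ⟨fun h1 h2 => hnot ⟨h1, h2⟩, fun _ => h⟩
    · exact ⟨fun h1 => absurd ⟨h1, h⟩ hnot, fun h1 => absurd h h1⟩
  · intro v
    have hsub : (Finset.univ.image g).filter (fun p => p.1 = v) ⊆
        (Finset.univ.filter fun e => (f e).1 = v).image g := by
      intro p hp
      obtain ⟨hp1, hp2⟩ := Finset.mem_filter.1 hp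
      obtain ⟨e, _, hgep⟩ := Finset.mem_image.1 hp1
      refine Finset.mem_image.2 ⟨e, Finset.mem_filter.2 ⟨Finset.mem_univ _, ?_⟩, hgep⟩
      have : (g e).1 = v := by rw [hgep]; exact hp2
      exact this
    have hfilt : (Finset.univ.filter fun e => (f e).1 = v).card
        ≤ (Finset.univ : Finset (Fin d)).card := by
      apply Finset.card_le_card_of_injOn (fun e => (f e).2)
        (fun e _ => Finset.mem_univ _)
      intro e he e' he' hsnd
      have h1 : (f e).1 = v := (Finset.mem_filter.1 he).2
      have h2 : (f e').1 = v := (Finset.mem_filter.1 he').2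
      apply hfinj
      apply Prod.ext
      · rw [h1, h2]
      · exact hsnd
    calc ((Finset.univ.image g).filter fun p => p.1 = v).card
        ≤ ((Finset.univ.filter fun e => (f e).1 = v).image g).card :=
          Finset.card_le_card hsub
      _ ≤ (Finset.univ.filter fun e => (f e).1 = v).card := Finset.card_image_le
      _ ≤ (Finset.univ : Finset (Fin d)).card := hfilt
      _ = d := by rw [Finset.card_univ, Fintype.card_fin]

/-- Every finite simple graph admits an orientation of its edges in which every
vertex has out-degree at most `⌈√(|E(G)|/2)⌉`. -/
theorem orientation_bounded_outdegree {V : Type*} [Fintype V] [DecidableEq V]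
    (G : SimpleGraph V) [DecidableRel G.Adj] :
    ∃ D : Finset (V × V),
      (∀ p ∈ D, G.Adj p.1 p.2) ∧
      (∀ u v : V, G.Adj u v → ((u, v) ∈ D ↔ (v, u) ∉ D)) ∧
      ∀ v : V, (D.filter fun p => p.1 = v).card
        ≤ ⌈Real.sqrt ((G.edgeFinset.card : ℝ) / 2)⌉₊ := by
  apply orientation_aux
  set m := G.edgeFinset.card with hm
  set d := ⌈Real.sqrt ((m : ℝ) / 2)⌉₊ with hd
  have h1 : Real.sqrt ((m : ℝ) / 2) ≤ (d : ℝ) := Nat.le_ceil _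
  have h0 : (0 : ℝ) ≤ (m : ℝ) / 2 := by positivity
  have h2 : (m : ℝ) ≤ 2 * (d : ℝ) ^ 2 := by
    nlinarith [Real.sq_sqrt h0, Real.sqrt_nonneg ((m : ℝ) / 2)]
  exact_mod_cast h2
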